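/- arXiv:0711.1151 — 3 statements merged into one kernel-verified Lean document; each statement's English description precedes it below -/
import Mathlib

section
/- Han's inequality: for discrete random variables X₁,…,Xₙ with finite joint entropy, (n-1)·H(X₁,…,Xₙ) ≤ ∑_{i=1}^n H(X_{[n]∖{i}}), where X_{[n]∖{i}} is the joint variable of all variables except X_i. -/
open Finset

/-- Probability that the discrete random variable `X` takes the value `v`,
where `p` is the probability mass function on the finite sample space `Ω`. -/
noncomputable def probOf {Ω S : Type*} [Fintype Ω] [DecidableEq S]
    (p : Ω → ℝ) (X : Ω → S) (v : S) : ℝ :=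
  ∑ ω ∈ univ.filter (fun ω => X ω = v), p ω

/-- Shannon entropy (base 2) of a discrete random variable. -/
noncomputable def H {Ω S : Type*} [Fintype Ω] [DecidableEq S]
    (p : Ω → ℝ) (X : Ω → S) : ℝ :=
  -∑ v ∈ univ.image X, probOf p X v * Real.logb 2 (probOf p X v)

/-- Conditional Shannon entropy `H(X | Y)`. -/
noncomputable def condH {Ω S T : Type*} [Fintype Ω] [DecidableEq S] [DecidableEq T]
    (p : Ω → ℝ) (X : Ω → S) (Y : Ω → T) : ℝ :=
  -∑ v ∈ univ.image (fun ω => (X ω, Y ω)),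
      probOf p (fun ω => (X ω, Y ω)) v *
        Real.logb 2 (probOf p (fun ω => (X ω, Y ω)) v / probOf p Y v.2)

/-- Joint entropy of the subfamily `(X i)_{i ∈ A}`. -/
noncomputable def jointH {Ω S : Type*} [Fintype Ω] [DecidableEq S] {n : ℕ}
    (p : Ω → ℝ) (X : Fin n → Ω → S) (A : Finset (Fin n)) : ℝ :=
  H p (fun ω (i : {i // i ∈ A}) => X i.1 ω)

/-- Conditional joint entropy `H(X_A | X_B)`. -/
noncomputable def condJointH {Ω S : Type*} [Fintype Ω] [DecidableEq S] {n : ℕ}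
    (p : Ω → ℝ) (X : Fin n → Ω → S) (A B : Finset (Fin n)) : ℝ :=
  condH p (fun ω (i : {i // i ∈ A}) => X i.1 ω) (fun ω (i : {i // i ∈ B}) => X i.1 ω)


section helpers
variable {Ω S T U V : Type*} [Fintype Ω] [DecidableEq S] [DecidableEq T] [DecidableEq U] [DecidableEq V]
lemma real_key {a b c d : ℝ} (ha : 0 < a) (hab : a ≤ b) (hac : a ≤ c) (hcd : c ≤ d) :
    a - b * c / d ≤ a * (Real.log (a / b) - Real.log (c / d)) := by
  have hb : 0 < b := lt_of_lt_of_le ha hab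
  have hc : 0 < c := lt_of_lt_of_le ha hac
  have hd : 0 < d := lt_of_lt_of_le hc hcd
  have h1 : Real.log ((b * c) / (a * d)) ≤ (b * c) / (a * d) - 1 :=
    Real.log_le_sub_one_of_pos (by positivity)
  have h2 : Real.log (a / b) - Real.log (c / d) = -Real.log ((b * c) / (a * d)) := by
    rw [Real.log_div ha.ne' hb.ne', Real.log_div hc.ne' hd.ne',
        Real.log_div (by positivity) (by positivity), Real.log_mul hb.ne' hc.ne',
        Real.log_mul ha.ne' hd.ne']
    ring
  rw [h2]
  have h4 := mul_le_mul_of_nonneg_left h1 ha.le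
  have h3 : a * ((b * c) / (a * d) - 1) = b * c / d - a := by
    field_simp
  nlinarith [h4, h3]




lemma probOf_nonneg (p : Ω → ℝ) (hp : ∀ ω, 0 ≤ p ω) (X : Ω → S) (v : S) :
    0 ≤ probOf p X v :=
  Finset.sum_nonneg fun ω _ => hp ω

lemma sum_probOf (p : Ω → ℝ) (hsum : ∑ ω, p ω = 1) (X : Ω → S) :
    ∑ v ∈ univ.image X, probOf p X v = 1 := by
  unfold probOf
  rw [Finset.sum_fiberwise_of_maps_to (fun ω _ => mem_image_of_mem X (mem_univ ω)) p]
  exact hsum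

lemma sum_probOf_filter (p : Ω → ℝ) (X : Ω → S) (φ : S → T) (c : T) :
    ∑ u ∈ (univ.image X).filter (fun u => φ u = c), probOf p X u
      = probOf p (fun ω => φ (X ω)) c := by
  unfold probOf
  rw [← Finset.sum_fiberwise_of_maps_to (g := X)
      (t := (univ.image X).filter (fun u => φ u = c))
      (s := univ.filter (fun ω => φ (X ω) = c)) ?h p]
  · apply Finset.sum_congr rfl
    intro u hu
    apply Finset.sum_congr _ (fun _ _ => rfl)
    simp only [mem_filter, mem_image] at hu
    ext ω
    simp only [mem_filter, mem_univ, true_and]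
    constructor
    · intro h; exact ⟨by rw [h]; exact hu.2, h⟩
    · intro h; exact h.2
  case h =>
    intro ω hω
    simp only [mem_filter, mem_univ, true_and] at hω ⊢
    exact ⟨mem_image_of_mem X (mem_univ ω), hω⟩

lemma probOf_le_comp (p : Ω → ℝ) (hp : ∀ ω, 0 ≤ p ω) (X : Ω → S) (φ : S → T) (u : S) :
    probOf p X u ≤ probOf p (fun ω => φ (X ω)) (φ u) := by
  apply Finset.sum_le_sum_of_subset_of_nonneg
  · intro ω
    simp only [mem_filter, mem_univ, true_and]
    intro h; rw [h]
  · exact fun ω _ _ => hp ω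

lemma sum_probOf_comp_mul (p : Ω → ℝ) (W : Ω → S) (φ : S → T) (F : T → ℝ) :
    ∑ v ∈ univ.image W, probOf p W v * F (φ v)
      = ∑ w ∈ univ.image (fun ω => φ (W ω)), probOf p (fun ω => φ (W ω)) w * F w := by
  rw [← Finset.sum_fiberwise_of_maps_to (g := φ)
      (t := univ.image (fun ω => φ (W ω))) ?h (fun v => probOf p W v * F (φ v))]
  · apply Finset.sum_congr rfl
    intro w hw
    have : ∑ v ∈ (univ.image W).filter (fun v => φ v = w), probOf p W v * F (φ v)
        = ∑ v ∈ (univ.image W).filter (fun v => φ v = w), probOf p W v * F w := by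
      apply Finset.sum_congr rfl
      intro v hv
      rw [(mem_filter.1 hv).2]
    rw [this, ← Finset.sum_mul, sum_probOf_filter]
  case h =>
    intro v hv
    obtain ⟨ω, -, rfl⟩ := Finset.mem_image.1 hv
    exact mem_image_of_mem _ (mem_univ ω)

lemma chain_rule (p : Ω → ℝ) (hp : ∀ ω, 0 ≤ p ω) (X : Ω → S) (Y : Ω → T) :
    H p (fun ω => (X ω, Y ω)) = H p Y + condH p X Y := by
  have key1 : ∑ v ∈ univ.image (fun ω => (X ω, Y ω)),
        probOf p (fun ω => (X ω, Y ω)) v * Real.logb 2 (probOf p Y v.2)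
      = ∑ y ∈ univ.image Y, probOf p Y y * Real.logb 2 (probOf p Y y) := by
    have := sum_probOf_comp_mul p (fun ω => (X ω, Y ω)) Prod.snd
      (fun y => Real.logb 2 (probOf p Y y))
    simpa using this
  unfold H condH
  rw [← key1, ← neg_add, ← Finset.sum_add_distrib]
  congr 1
  apply Finset.sum_congr rfl
  intro v hv
  by_cases hq : probOf p (fun ω => (X ω, Y ω)) v = 0
  · simp [hq]
  · have hq' : 0 < probOf p (fun ω => (X ω, Y ω)) v :=
      lt_of_le_of_ne (probOf_nonneg p hp _ v) (Ne.symm hq)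
    have hle : probOf p (fun ω => (X ω, Y ω)) v ≤ probOf p Y v.2 := by
      have := probOf_le_comp p hp (fun ω => (X ω, Y ω)) Prod.snd v
      simpa using this
    have hr : 0 < probOf p Y v.2 := lt_of_lt_of_le hq' hle
    rw [Real.logb_div hq hr.ne']
    ring

lemma condH_pair_le (p : Ω → ℝ) (hp : ∀ ω, 0 ≤ p ω) (hsum : ∑ ω, p ω = 1)
    (X : Ω → S) (Y : Ω → T) (Z : Ω → U) :
    condH p X (fun ω => (Y ω, Z ω)) ≤ condH p X Y := by
  classical
  have stepA : condH p X Y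
      = -∑ v ∈ univ.image (fun ω => (X ω, (Y ω, Z ω))),
          probOf p (fun ω => (X ω, (Y ω, Z ω))) v *
            Real.logb 2 (probOf p (fun ω => (X ω, Y ω)) (v.1, v.2.1) / probOf p Y v.2.1) := by
    rw [condH]
    congr 1
    have h := sum_probOf_comp_mul p (fun ω => (X ω, (Y ω, Z ω))) (fun v => (v.1, v.2.1))
      (fun w => Real.logb 2 (probOf p (fun ω => (X ω, Y ω)) w / probOf p Y w.2))
    simpa using h.symm
  have sum2 : ∑ v ∈ univ.image (fun ω => (X ω, (Y ω, Z ω))),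
      probOf p (fun ω => (Y ω, Z ω)) v.2 * probOf p (fun ω => (X ω, Y ω)) (v.1, v.2.1)
        / probOf p Y v.2.1 ≤ 1 := by
    have himgY : univ.image (fun ω => (((fun ω => (X ω, (Y ω, Z ω))) ω).2.1)) = univ.image Y := rfl
    rw [← Finset.sum_fiberwise_of_maps_to (s := univ.image (fun ω => (X ω, (Y ω, Z ω))))
      (g := fun v : S × (T × U) => v.2.1) (t := univ.image Y)
      (fun v hv => by
        obtain ⟨ω, -, rfl⟩ := Finset.mem_image.1 hv
        exact mem_image_of_mem Y (mem_univ ω))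
      (fun v : S × (T × U) => probOf p (fun ω => (Y ω, Z ω)) v.2 *
        probOf p (fun ω => (X ω, Y ω)) (v.1, v.2.1) / probOf p Y v.2.1)]
    calc ∑ y ∈ univ.image Y,
        ∑ v ∈ (univ.image (fun ω => (X ω, (Y ω, Z ω)))).filter (fun v => v.2.1 = y),
          probOf p (fun ω => (Y ω, Z ω)) v.2 *
            probOf p (fun ω => (X ω, Y ω)) (v.1, v.2.1) / probOf p Y v.2.1
        ≤ ∑ y ∈ univ.image Y, probOf p Y y := ?_
      _ = 1 := sum_probOf p hsum Y
    apply Finset.sum_le_sum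
    intro y hy
    have hterm : ∀ v ∈ (univ.image (fun ω => (X ω, (Y ω, Z ω)))).filter (fun v => v.2.1 = y),
        probOf p (fun ω => (Y ω, Z ω)) v.2 *
            probOf p (fun ω => (X ω, Y ω)) (v.1, v.2.1) / probOf p Y v.2.1
          = probOf p (fun ω => (Y ω, Z ω)) (y, v.2.2) *
              probOf p (fun ω => (X ω, Y ω)) (v.1, y) / probOf p Y y := by
      intro v hv
      have h2 := (mem_filter.1 hv).2
      rw [← h2]
    rw [Finset.sum_congr rfl hterm, ← Finset.sum_div]
    by_cases hry : probOf p Y y = 0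
    · rw [hry, div_zero]
    · have hry' : 0 < probOf p Y y :=
        lt_of_le_of_ne (probOf_nonneg p hp Y y) (Ne.symm hry)
      rw [div_le_iff₀ hry']
      -- reindex by θ v = (v.1, v.2.2)
      have hinjθ : ∀ v ∈ (univ.image (fun ω => (X ω, (Y ω, Z ω)))).filter (fun v => v.2.1 = y),
          ∀ v' ∈ (univ.image (fun ω => (X ω, (Y ω, Z ω)))).filter (fun v => v.2.1 = y),
          (fun v => (v.1, v.2.2)) v = (fun v => (v.1, v.2.2)) v' → v = v' := by
        intro v hv v' hv' h
        simp only [Prod.mk.injEq] at h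
        exact Prod.ext h.1
          (Prod.ext (((mem_filter.1 hv).2).trans ((mem_filter.1 hv').2).symm) h.2)
      have e1 : ∑ w ∈ ((univ.image (fun ω => (X ω, (Y ω, Z ω)))).filter
            (fun v => v.2.1 = y)).image (fun v => (v.1, v.2.2)),
          probOf p (fun ω => (Y ω, Z ω)) (y, w.2) * probOf p (fun ω => (X ω, Y ω)) (w.1, y)
        = ∑ v ∈ (univ.image (fun ω => (X ω, (Y ω, Z ω)))).filter (fun v => v.2.1 = y),
          probOf p (fun ω => (Y ω, Z ω)) (y, v.2.2) * probOf p (fun ω => (X ω, Y ω)) (v.1, y) :=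
        Finset.sum_image hinjθ
      rw [← e1]
      set A := ((univ.image (fun ω => (X ω, Y ω))).filter (fun w => w.2 = y)).image Prod.fst with hA
      set B := ((univ.image (fun ω => (Y ω, Z ω))).filter (fun w => w.1 = y)).image Prod.snd with hB
      have hsubset : ((univ.image (fun ω => (X ω, (Y ω, Z ω)))).filter
          (fun v => v.2.1 = y)).image (fun v => (v.1, v.2.2)) ⊆ A ×ˢ B := by
        intro w hw
        obtain ⟨v, hv, rfl⟩ := Finset.mem_image.1 hw
        have h2 := (mem_filter.1 hv).2
        obtain ⟨ω, -, rfl⟩ := Finset.mem_image.1 (mem_filter.1 hv).1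
        simp only at h2
        rw [Finset.mem_product]
        constructor
        · rw [hA]
          apply Finset.mem_image.2
          exact ⟨(X ω, Y ω), mem_filter.2 ⟨mem_image_of_mem _ (mem_univ ω), h2⟩, rfl⟩
        · rw [hB]
          apply Finset.mem_image.2
          exact ⟨(Y ω, Z ω), mem_filter.2 ⟨mem_image_of_mem _ (mem_univ ω), h2⟩, rfl⟩
      calc ∑ w ∈ ((univ.image (fun ω => (X ω, (Y ω, Z ω)))).filter
            (fun v => v.2.1 = y)).image (fun v => (v.1, v.2.2)),
          probOf p (fun ω => (Y ω, Z ω)) (y, w.2) * probOf p (fun ω => (X ω, Y ω)) (w.1, y)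
          ≤ ∑ w ∈ A ×ˢ B,
            probOf p (fun ω => (Y ω, Z ω)) (y, w.2) * probOf p (fun ω => (X ω, Y ω)) (w.1, y) :=
          Finset.sum_le_sum_of_subset_of_nonneg hsubset
            (fun w _ _ => mul_nonneg (probOf_nonneg p hp _ _) (probOf_nonneg p hp _ _))
        _ = (∑ x ∈ A, probOf p (fun ω => (X ω, Y ω)) (x, y)) *
            (∑ z ∈ B, probOf p (fun ω => (Y ω, Z ω)) (y, z)) := by
          rw [Finset.sum_mul_sum, Finset.sum_product]
          apply Finset.sum_congr rfl
          intro x _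
          apply Finset.sum_congr rfl
          intro z _
          ring
        _ ≤ probOf p Y y * probOf p Y y := by
          have hAeq : ∑ x ∈ A, probOf p (fun ω => (X ω, Y ω)) (x, y) = probOf p Y y := by
            rw [hA]
            have hinjA : ∀ w ∈ (univ.image (fun ω => (X ω, Y ω))).filter (fun w => w.2 = y),
                ∀ w' ∈ (univ.image (fun ω => (X ω, Y ω))).filter (fun w => w.2 = y),
                w.1 = w'.1 → w = w' := by
              intro w hw w' hw' h
              exact Prod.ext h (((mem_filter.1 hw).2).trans ((mem_filter.1 hw').2).symm)
            rw [Finset.sum_image hinjA]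
            have : ∀ w ∈ (univ.image (fun ω => (X ω, Y ω))).filter (fun w => w.2 = y),
                probOf p (fun ω => (X ω, Y ω)) (w.1, y) = probOf p (fun ω => (X ω, Y ω)) w := by
              intro w hw
              rw [← (mem_filter.1 hw).2, Prod.mk.eta]
            rw [Finset.sum_congr rfl this]
            have h := sum_probOf_filter p (fun ω => (X ω, Y ω)) Prod.snd y
            simpa using h
          have hBeq : ∑ z ∈ B, probOf p (fun ω => (Y ω, Z ω)) (y, z) = probOf p Y y := by
            rw [hB]
            have hinjB : ∀ w ∈ (univ.image (fun ω => (Y ω, Z ω))).filter (fun w => w.1 = y),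
                ∀ w' ∈ (univ.image (fun ω => (Y ω, Z ω))).filter (fun w => w.1 = y),
                w.2 = w'.2 → w = w' := by
              intro w hw w' hw' h
              exact Prod.ext (((mem_filter.1 hw).2).trans ((mem_filter.1 hw').2).symm) h
            rw [Finset.sum_image hinjB]
            have : ∀ w ∈ (univ.image (fun ω => (Y ω, Z ω))).filter (fun w => w.1 = y),
                probOf p (fun ω => (Y ω, Z ω)) (y, w.2) = probOf p (fun ω => (Y ω, Z ω)) w := by
              intro w hw
              rw [← (mem_filter.1 hw).2, Prod.mk.eta]
            rw [Finset.sum_congr rfl this]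
            have h := sum_probOf_filter p (fun ω => (Y ω, Z ω)) Prod.fst y
            simpa using h
          rw [hAeq, hBeq]
        _ = probOf p Y y * probOf p Y y := rfl
  have key : ∀ v ∈ univ.image (fun ω => (X ω, (Y ω, Z ω))),
      probOf p (fun ω => (X ω, (Y ω, Z ω))) v
        - probOf p (fun ω => (Y ω, Z ω)) v.2 * probOf p (fun ω => (X ω, Y ω)) (v.1, v.2.1)
            / probOf p Y v.2.1
      ≤ probOf p (fun ω => (X ω, (Y ω, Z ω))) v *
          (Real.log (probOf p (fun ω => (X ω, (Y ω, Z ω))) v / probOf p (fun ω => (Y ω, Z ω)) v.2)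
            - Real.log (probOf p (fun ω => (X ω, Y ω)) (v.1, v.2.1) / probOf p Y v.2.1)) := by
    intro v hv
    by_cases hqz : probOf p (fun ω => (X ω, (Y ω, Z ω))) v = 0
    · rw [hqz, zero_mul, zero_sub, neg_nonpos]
      exact div_nonneg (mul_nonneg (probOf_nonneg p hp _ _) (probOf_nonneg p hp _ _))
        (probOf_nonneg p hp _ _)
    · have hq : 0 < probOf p (fun ω => (X ω, (Y ω, Z ω))) v :=
        lt_of_le_of_ne (probOf_nonneg p hp _ v) (Ne.symm hqz)
      have hab : probOf p (fun ω => (X ω, (Y ω, Z ω))) v ≤ probOf p (fun ω => (Y ω, Z ω)) v.2 := by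
        have := probOf_le_comp p hp (fun ω => (X ω, (Y ω, Z ω))) Prod.snd v
        simpa using this
      have hac : probOf p (fun ω => (X ω, (Y ω, Z ω))) v
          ≤ probOf p (fun ω => (X ω, Y ω)) (v.1, v.2.1) := by
        have := probOf_le_comp p hp (fun ω => (X ω, (Y ω, Z ω))) (fun w => (w.1, w.2.1)) v
        simpa using this
      have hcd : probOf p (fun ω => (X ω, Y ω)) (v.1, v.2.1) ≤ probOf p Y v.2.1 := by
        have := probOf_le_comp p hp (fun ω => (X ω, Y ω)) Prod.snd (v.1, v.2.1)
        simpa using this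
      exact real_key hq hab hac hcd
  have sum1 : ∑ v ∈ univ.image (fun ω => (X ω, (Y ω, Z ω))),
      probOf p (fun ω => (X ω, (Y ω, Z ω))) v = 1 := sum_probOf p hsum _
  have total : 0 ≤ ∑ v ∈ univ.image (fun ω => (X ω, (Y ω, Z ω))),
      probOf p (fun ω => (X ω, (Y ω, Z ω))) v *
        (Real.log (probOf p (fun ω => (X ω, (Y ω, Z ω))) v / probOf p (fun ω => (Y ω, Z ω)) v.2)
          - Real.log (probOf p (fun ω => (X ω, Y ω)) (v.1, v.2.1) / probOf p Y v.2.1)) := by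
    have h := Finset.sum_le_sum key
    rw [Finset.sum_sub_distrib, sum1] at h
    linarith
  have hLHS : condH p X (fun ω => (Y ω, Z ω))
      = -∑ v ∈ univ.image (fun ω => (X ω, (Y ω, Z ω))),
          probOf p (fun ω => (X ω, (Y ω, Z ω))) v *
            Real.logb 2 (probOf p (fun ω => (X ω, (Y ω, Z ω))) v /
              probOf p (fun ω => (Y ω, Z ω)) v.2) := rfl
  rw [hLHS, stepA, neg_le_neg_iff, ← sub_nonneg, ← Finset.sum_sub_distrib]
  have conv : ∀ v ∈ univ.image (fun ω => (X ω, (Y ω, Z ω))),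
      probOf p (fun ω => (X ω, (Y ω, Z ω))) v *
          Real.logb 2 (probOf p (fun ω => (X ω, (Y ω, Z ω))) v /
            probOf p (fun ω => (Y ω, Z ω)) v.2)
        - probOf p (fun ω => (X ω, (Y ω, Z ω))) v *
            Real.logb 2 (probOf p (fun ω => (X ω, Y ω)) (v.1, v.2.1) / probOf p Y v.2.1)
      = probOf p (fun ω => (X ω, (Y ω, Z ω))) v *
          (Real.log (probOf p (fun ω => (X ω, (Y ω, Z ω))) v /
              probOf p (fun ω => (Y ω, Z ω)) v.2)
            - Real.log (probOf p (fun ω => (X ω, Y ω)) (v.1, v.2.1) / probOf p Y v.2.1))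
          / Real.log 2 := by
    intro v _
    rw [Real.logb, Real.logb]
    ring
  rw [Finset.sum_congr rfl conv, ← Finset.sum_div]
  exact div_nonneg total (Real.log_nonneg one_le_two)





lemma probOf_congr_point (p : Ω → ℝ) {Y : Ω → S} {Y' : Ω → T} {k : S → T} {l : T → S}
    (hk : ∀ ω, k (Y ω) = Y' ω) (hl : ∀ ω, l (Y' ω) = Y ω) (ω : Ω) :
    probOf p Y' (Y' ω) = probOf p Y (Y ω) := by
  unfold probOf
  apply Finset.sum_congr _ (fun _ _ => rfl)
  ext ω'
  simp only [mem_filter, mem_univ, true_and]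
  constructor
  · intro h
    have := hl ω'
    rw [h, hl ω] at this
    exact this.symm
  · intro h
    rw [← hk ω', h, hk ω]

lemma H_congr (p : Ω → ℝ) {X : Ω → S} {Y : Ω → T} (f : S → T) (g : T → S)
    (hf : ∀ ω, f (X ω) = Y ω) (hg : ∀ ω, g (Y ω) = X ω) :
    H p X = H p Y := by
  unfold H
  congr 1
  have himg : univ.image Y = (univ.image X).image f := by
    rw [Finset.image_image]
    exact (Finset.image_congr (fun ω _ => (hf ω).symm))
  have hinj : ∀ a ∈ univ.image X, ∀ b ∈ univ.image X, f a = f b → a = b := by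
    intro a ha b hb hab
    obtain ⟨ω, -, rfl⟩ := Finset.mem_image.1 ha
    obtain ⟨ω', -, rfl⟩ := Finset.mem_image.1 hb
    have : g (f (X ω)) = g (f (X ω')) := by rw [hab]
    rwa [hf ω, hf ω', hg ω, hg ω'] at this
  rw [himg]
  rw [Finset.sum_image hinj]
  apply Finset.sum_congr rfl
  intro v hv
  obtain ⟨ω, -, rfl⟩ := Finset.mem_image.1 hv
  rw [hf ω, probOf_congr_point p hf hg ω]

lemma condH_congr (p : Ω → ℝ) {X : Ω → S} {Y : Ω → T} {X' : Ω → U} {Y' : Ω → V}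
    (f : S → U) (g : U → S) (k : T → V) (l : V → T)
    (hf : ∀ ω, f (X ω) = X' ω) (hg : ∀ ω, g (X' ω) = X ω)
    (hk : ∀ ω, k (Y ω) = Y' ω) (hl : ∀ ω, l (Y' ω) = Y ω) :
    condH p X Y = condH p X' Y' := by
  have hF : ∀ ω, Prod.map f k ((fun ω => (X ω, Y ω)) ω) = (fun ω => (X' ω, Y' ω)) ω := by
    intro ω; simp only [Prod.map]; rw [hf ω, hk ω]
  have hG : ∀ ω, Prod.map g l ((fun ω => (X' ω, Y' ω)) ω) = (fun ω => (X ω, Y ω)) ω := by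
    intro ω; simp only [Prod.map]; rw [hg ω, hl ω]
  unfold condH
  congr 1
  have himg : univ.image (fun ω => (X' ω, Y' ω))
      = (univ.image (fun ω => (X ω, Y ω))).image (Prod.map f k) := by
    rw [Finset.image_image]
    exact (Finset.image_congr (fun ω _ => (hF ω).symm))
  have hinj : ∀ a ∈ univ.image (fun ω => (X ω, Y ω)), ∀ b ∈ univ.image (fun ω => (X ω, Y ω)),
      Prod.map f k a = Prod.map f k b → a = b := by
    intro a ha b hb hab
    obtain ⟨ω, -, rfl⟩ := Finset.mem_image.1 ha
    obtain ⟨ω', -, rfl⟩ := Finset.mem_image.1 hb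
    have : Prod.map g l (Prod.map f k ((fun ω => (X ω, Y ω)) ω))
        = Prod.map g l (Prod.map f k ((fun ω => (X ω, Y ω)) ω')) := by rw [hab]
    rwa [hF ω, hF ω', hG ω, hG ω'] at this
  rw [himg]
  rw [Finset.sum_image hinj]
  apply Finset.sum_congr rfl
  intro v hv
  obtain ⟨ω, -, rfl⟩ := Finset.mem_image.1 hv
  rw [hF ω, probOf_congr_point p hF hG ω]
  have h2 : probOf p Y' (((fun ω => (X' ω, Y' ω)) ω).2) = probOf p Y (((fun ω => (X ω, Y ω)) ω).2) :=
    probOf_congr_point p hk hl ω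
  rw [h2]

lemma H_const (p : Ω → ℝ) (hsum : ∑ ω, p ω = 1) (X : Ω → S)
    (hc : ∀ ω ω', X ω = X ω') : H p X = 0 := by
  have hΩ : Nonempty Ω := by
    by_contra h
    rw [not_nonempty_iff] at h
    rw [Finset.univ_eq_empty, Finset.sum_empty] at hsum
    norm_num at hsum
  obtain ⟨ω₀⟩ := hΩ
  have himg : univ.image X = {X ω₀} := by
    ext v
    simp only [Finset.mem_image, Finset.mem_singleton, mem_univ, true_and]
    constructor
    · rintro ⟨ω, rfl⟩; exact (hc ω ω₀).symm ▸ rfl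
    · rintro rfl; exact ⟨ω₀, rfl⟩
  have hone : probOf p X (X ω₀) = 1 := by
    rw [probOf, Finset.filter_true_of_mem (fun ω _ => hc ω ω₀)]
    exact hsum
  rw [H, himg, Finset.sum_singleton, hone]
  simp

end helpers

section joint
variable {Ω S : Type*} [Fintype Ω] [DecidableEq S] {n : ℕ}

lemma jointH_empty (p : Ω → ℝ) (hsum : ∑ ω, p ω = 1) (X : Fin n → Ω → S) :
    jointH p X (∅ : Finset (Fin n)) = 0 := by
  apply H_const p hsum
  intro ω ω'
  funext j
  exact absurd j.2 (Finset.notMem_empty j.1)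

lemma jointH_insert (p : Ω → ℝ) (hp : ∀ ω, 0 ≤ p ω) (X : Fin n → Ω → S)
    (i : Fin n) (A : Finset (Fin n)) :
    jointH p X (insert i A) = jointH p X A + condJointH p X {i} A := by
  classical
  rw [jointH, jointH, condJointH,
    ← chain_rule p hp (fun ω (j : {j // j ∈ ({i} : Finset (Fin n))}) => X j.1 ω)
      (fun ω (j : {j // j ∈ A}) => X j.1 ω)]
  apply H_congr p
    (f := fun (h : {j // j ∈ insert i A} → S) =>
      ((fun j => h ⟨j.1, Finset.mem_insert.2 (Or.inl (Finset.mem_singleton.1 j.2))⟩ :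
          {j // j ∈ ({i} : Finset (Fin n))} → S),
        (fun j => h ⟨j.1, Finset.mem_insert_of_mem j.2⟩ : {j // j ∈ A} → S)))
    (g := fun q (j : {j // j ∈ insert i A}) =>
      if hj : j.1 ∈ A then q.2 ⟨j.1, hj⟩
      else q.1 ⟨j.1, Finset.mem_singleton.2
        ((Finset.mem_insert.1 j.2).resolve_right hj)⟩)
  · intro ω; rfl
  · intro ω
    funext j
    dsimp only
    split <;> rfl

lemma condJointH_anti (p : Ω → ℝ) (hp : ∀ ω, 0 ≤ p ω) (hsum : ∑ ω, p ω = 1)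
    (X : Fin n → Ω → S) (A : Finset (Fin n)) {B B' : Finset (Fin n)} (hBB' : B ⊆ B') :
    condJointH p X A B' ≤ condJointH p X A B := by
  classical
  have step1 : condJointH p X A B'
      = condH p (fun ω (j : {j // j ∈ A}) => X j.1 ω)
          (fun ω => ((fun (j : {j // j ∈ B}) => X j.1 ω),
            (fun (j : {j // j ∈ B'}) => X j.1 ω))) := by
    rw [condJointH]
    apply condH_congr p (f := id) (g := id)
      (k := fun (y : {j // j ∈ B'} → S) =>
        ((fun j => y ⟨j.1, hBB' j.2⟩ : {j // j ∈ B} → S), y))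
      (l := Prod.snd)
    · intro ω; rfl
    · intro ω; rfl
    · intro ω; rfl
    · intro ω; rfl
  rw [step1]
  exact condH_pair_le p hp hsum _ _ _

end joint

/-- Han's inequality: `(n-1)·H(X₁,…,Xₙ) ≤ ∑ᵢ H(X_{[n]∖{i}})`. -/
theorem han_inequality {Ω S : Type*} [Fintype Ω] [DecidableEq S] {n : ℕ}
    (p : Ω → ℝ) (hp : ∀ ω, 0 ≤ p ω) (hsum : ∑ ω, p ω = 1)
    (X : Fin n → Ω → S) :
    ((n : ℝ) - 1) * jointH p X univ ≤ ∑ i, jointH p X (univ.erase i) := by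
  classical
  have key : ∀ i : Fin n, jointH p X univ
      = jointH p X (univ.erase i) + condJointH p X {i} (univ.erase i) := by
    intro i
    conv_lhs => rw [← Finset.insert_erase (mem_univ i)]
    exact jointH_insert p hp X i (univ.erase i)
  have tele : ∀ m k : ℕ, k + m = n →
      jointH p X (univ.filter (fun j : Fin n => k ≤ (j : ℕ)))
        = ∑ i ∈ univ.filter (fun j : Fin n => k ≤ (j : ℕ)),
            condJointH p X {i} (univ.filter (fun j : Fin n => (i : ℕ) + 1 ≤ (j : ℕ))) := by
    intro m
    induction m with
    | zero =>
      intro k hk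
      have hempty : univ.filter (fun j : Fin n => k ≤ (j : ℕ)) = ∅ := by
        ext j
        simp only [mem_filter, mem_univ, true_and, Finset.notMem_empty, iff_false, not_le]
        have := j.isLt
        omega
      rw [hempty, Finset.sum_empty]
      exact jointH_empty p hsum X
    | succ m ih =>
      intro k hk
      have hkn : k < n := by omega
      have hsplit : univ.filter (fun j : Fin n => k ≤ (j : ℕ))
          = insert (⟨k, hkn⟩ : Fin n) (univ.filter (fun j : Fin n => k + 1 ≤ (j : ℕ))) := by
        ext j
        simp only [mem_filter, mem_univ, true_and, Finset.mem_insert, Fin.ext_iff]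
        omega
      have hnotmem : (⟨k, hkn⟩ : Fin n) ∉ univ.filter (fun j : Fin n => k + 1 ≤ (j : ℕ)) := by
        simp
      rw [hsplit, jointH_insert p hp X _ _, Finset.sum_insert hnotmem,
        ih (k + 1) (by omega)]
      simp only [Fin.val_mk]
      ring
  have h0 : univ.filter (fun j : Fin n => 0 ≤ (j : ℕ)) = univ := by
    simp
  have hfull := tele n 0 (by omega)
  rw [h0] at hfull
  have mono : ∀ i : Fin n, condJointH p X {i} (univ.erase i)
      ≤ condJointH p X {i} (univ.filter (fun j : Fin n => (i : ℕ) + 1 ≤ (j : ℕ))) := by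
    intro i
    apply condJointH_anti p hp hsum X
    intro j hj
    simp only [mem_filter, mem_univ, true_and] at hj
    simp only [Finset.mem_erase, mem_univ, and_true]
    intro h
    rw [h] at hj
    omega
  have hsum1 : ∑ i, condJointH p X {i} (univ.erase i) ≤ jointH p X univ := by
    rw [hfull]
    exact Finset.sum_le_sum (fun i _ => mono i)
  have hsum2 : (n : ℝ) * jointH p X univ
      = ∑ i, jointH p X (univ.erase i) + ∑ i, condJointH p X {i} (univ.erase i) := by
    rw [← Finset.sum_add_distrib]
    have h2 : ∑ _i : Fin n, jointH p X univ
        = ∑ x : Fin n, (jointH p X (univ.erase x) + condJointH p X {x} (univ.erase x)) :=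
      Finset.sum_congr rfl (fun i _ => key i)
    rw [Finset.sum_const, Finset.card_univ, Fintype.card_fin, nsmul_eq_mul] at h2
    exact h2
  have hexp : ((n : ℝ) - 1) * jointH p X univ
      = (n : ℝ) * jointH p X univ - jointH p X univ := by ring
  rw [hexp, hsum2]
  linarith
end

section
/- Let X₁,…,Xₙ be discrete random variables with finite joint entropy and 𝒜 a finite multiset of subsets of [n]. Let 𝒜♯ be the multiset consisting of the sets A♯_j = {i ∈ [n] : i lies in at least j members of 𝒜} for j = 1, 2, …. Then ∑_{A∈𝒜♯} H(X_A) ≤ ∑_{A∈𝒜} H(X_A). -/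
open Finset

section Aux

variable {Ω S : Type*} [Fintype Ω] [DecidableEq S] {n : ℕ}

/-- The pattern of `X` on `A` at sample point `ω`. -/
noncomputable def patt (X : Fin n → Ω → S) (A : Finset (Fin n)) (ω : Ω) :
    {i // i ∈ A} → S :=
  fun i => X i.1 ω

/-- `PP p X A ω` is the probability of the event `X_A = X_A(ω)`. -/
noncomputable def PP (p : Ω → ℝ) (X : Fin n → Ω → S) (A : Finset (Fin n)) (ω : Ω) : ℝ :=
  ∑ ω' ∈ univ.filter (fun ω' => patt X A ω' = patt X A ω), p ω'

variable {p : Ω → ℝ} {X : Fin n → Ω → S}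

lemma patt_sub {A B : Finset (Fin n)} (hAB : A ⊆ B) {ω ω' : Ω}
    (h : patt X B ω' = patt X B ω) : patt X A ω' = patt X A ω := by
  funext i
  exact congrFun h ⟨i.1, hAB i.2⟩

lemma probOf_patt (A : Finset (Fin n)) (ω : Ω) :
    probOf p (patt X A) (patt X A ω) = PP p X A ω := rfl

lemma PP_nonneg (hp : ∀ ω, 0 ≤ p ω) (A : Finset (Fin n)) (ω : Ω) : 0 ≤ PP p X A ω :=
  Finset.sum_nonneg fun ω' _ => hp ω'

lemma le_PP (hp : ∀ ω, 0 ≤ p ω) (A : Finset (Fin n)) (ω : Ω) : p ω ≤ PP p X A ω := by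
  have : ω ∈ univ.filter (fun ω' => patt X A ω' = patt X A ω) := by simp
  exact Finset.single_le_sum (fun ω' _ => hp ω') this

lemma PP_le_one (hp : ∀ ω, 0 ≤ p ω) (hsum : ∑ ω, p ω = 1) (A : Finset (Fin n)) (ω : Ω) :
    PP p X A ω ≤ 1 := by
  rw [← hsum]
  exact Finset.sum_le_sum_of_subset_of_nonneg (Finset.filter_subset _ _)
    (fun ω' _ _ => hp ω')

lemma PP_congr {A : Finset (Fin n)} {ω ω' : Ω} (h : patt X A ω = patt X A ω') :
    PP p X A ω = PP p X A ω' := by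
  unfold PP
  apply Finset.sum_congr _ (fun _ _ => rfl)
  ext ω''
  simp [h]

/-- Entropy as a sum over the sample space. -/
lemma jointH_eq (p : Ω → ℝ) (X : Fin n → Ω → S) (A : Finset (Fin n)) :
    jointH p X A = -∑ ω, p ω * Real.logb 2 (PP p X A ω) := by
  have : jointH p X A = H p (patt X A) := rfl
  rw [this, H]
  congr 1
  have hmaps : ∀ ω ∈ (univ : Finset Ω), patt X A ω ∈ univ.image (patt X A) :=
    fun ω _ => Finset.mem_image_of_mem _ (Finset.mem_univ ω)
  rw [← Finset.sum_fiberwise_of_maps_to hmaps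
      (fun ω => p ω * Real.logb 2 (PP p X A ω))]
  apply Finset.sum_congr rfl
  intro v hv
  have hconst : ∀ ω ∈ univ.filter (fun ω => patt X A ω = v),
      p ω * Real.logb 2 (PP p X A ω) = p ω * Real.logb 2 (probOf p (patt X A) v) := by
    intro ω hω
    have hωv : patt X A ω = v := (Finset.mem_filter.mp hω).2
    rw [← hωv, probOf_patt]
  rw [Finset.sum_congr rfl hconst, ← Finset.sum_mul]
  rfl

lemma jointH_nonneg (hp : ∀ ω, 0 ≤ p ω) (hsum : ∑ ω, p ω = 1) (A : Finset (Fin n)) :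
    0 ≤ jointH p X A := by
  rw [jointH_eq, neg_nonneg]
  apply Finset.sum_nonpos
  intro ω _
  rcases eq_or_lt_of_le (hp ω) with h | h
  · rw [← h]; simp
  · apply mul_nonpos_of_nonneg_of_nonpos (hp ω)
    apply Real.logb_nonpos one_lt_two
    · exact le_trans (le_of_lt h) (le_PP hp A ω)
    · exact PP_le_one hp hsum A ω

end Aux

section Submod

variable {Ω S : Type*} [Fintype Ω] [DecidableEq S] {n : ℕ}
variable {p : Ω → ℝ} {X : Fin n → Ω → S}

/-- Generic product bound for sums over a set injected into a product of images. -/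
lemma pair_sum_le {α β γ : Type*} [DecidableEq β] [DecidableEq γ]
    (s : Finset α) (f : α → β) (g : α → γ) (F : β → ℝ) (G : γ → ℝ)
    (hF : ∀ b, 0 ≤ F b) (hG : ∀ c, 0 ≤ G c)
    (hinj : ∀ x ∈ s, ∀ y ∈ s, f x = f y → g x = g y → x = y) :
    ∑ x ∈ s, F (f x) * G (g x) ≤ (∑ b ∈ s.image f, F b) * (∑ c ∈ s.image g, G c) := by
  classical
  have h1 : ∑ x ∈ s, F (f x) * G (g x)
      = ∑ q ∈ s.image (fun x => (f x, g x)), F q.1 * G q.2 := by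
    rw [Finset.sum_image]
    intro x hx y hy hxy
    exact hinj x hx y hy (congrArg Prod.fst hxy) (congrArg Prod.snd hxy)
  rw [h1, Finset.sum_mul_sum, ← Finset.sum_product']
  apply Finset.sum_le_sum_of_subset_of_nonneg
  · intro q hq
    obtain ⟨x, hx, hxq⟩ := Finset.mem_image.mp hq
    rw [← hxq]
    exact Finset.mem_product.mpr ⟨Finset.mem_image_of_mem _ hx, Finset.mem_image_of_mem _ hx⟩
  · intro q _ _
    exact mul_nonneg (hF q.1) (hG q.2)

/-- The key counting inequality behind submodularity. -/
lemma T_le_one (hp : ∀ ω, 0 ≤ p ω) (hsum : ∑ ω, p ω = 1) (A B : Finset (Fin n)) :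
    ∑ ω, p ω * (PP p X A ω * PP p X B ω /
        (PP p X (A ∪ B) ω * PP p X (A ∩ B) ω)) ≤ 1 := by
  classical
  set C := A ∩ B with hC
  set U := A ∪ B with hU
  have hCA : C ⊆ A := inter_subset_left
  have hCB : C ⊆ B := inter_subset_right
  have hAU : A ⊆ U := subset_union_left
  have hBU : B ⊆ U := subset_union_right
  have hmaps : ∀ ω ∈ (univ : Finset Ω), patt X C ω ∈ univ.image (patt X C) :=
    fun ω _ => Finset.mem_image_of_mem _ (Finset.mem_univ ω)
  calc ∑ ω, p ω * (PP p X A ω * PP p X B ω / (PP p X U ω * PP p X C ω))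
      = ∑ c ∈ univ.image (patt X C), ∑ ω ∈ univ.filter (fun ω => patt X C ω = c),
          p ω * (PP p X A ω * PP p X B ω / (PP p X U ω * PP p X C ω)) :=
        (Finset.sum_fiberwise_of_maps_to hmaps _).symm
    _ ≤ ∑ c ∈ univ.image (patt X C), ∑ ω ∈ univ.filter (fun ω => patt X C ω = c), p ω := by
        apply Finset.sum_le_sum
        intro c hc
        obtain ⟨ω₀, _, hω₀⟩ := Finset.mem_image.mp hc
        -- the fiber of c
        set F : Finset Ω := univ.filter (fun ω => patt X C ω = c) with hF
        have hmem : ∀ ω ∈ F, patt X C ω = patt X C ω₀ := by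
          intro ω hω
          rw [(Finset.mem_filter.mp hω).2, hω₀]
        set Q : ℝ := PP p X C ω₀ with hQ
        have hFQ : ∑ ω ∈ F, p ω = Q := by
          rw [hQ, PP]
          apply Finset.sum_congr _ (fun _ _ => rfl)
          ext ω; simp [hF, hω₀]
        have hPPC : ∀ ω ∈ F, PP p X C ω = Q := fun ω hω => PP_congr (hmem ω hω)
        rw [hFQ]
        rcases eq_or_lt_of_le (PP_nonneg (X := X) hp C ω₀) with hQ0 | hQpos
        · -- all p's in the fiber vanish
          rw [← hQ] at hQ0
          have : ∀ ω ∈ F, p ω = 0 := by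
            intro ω hω
            have h1 := le_PP (X := X) hp C ω
            rw [hPPC ω hω, ← hQ0] at h1
            exact le_antisymm h1 (hp ω)
          have hz : ∀ ω ∈ F, p ω * (PP p X A ω * PP p X B ω / (PP p X U ω * PP p X C ω)) = 0 := by
            intro ω hω
            rw [this ω hω, zero_mul]
          exact (Finset.sum_eq_zero hz).le.trans hQ0.le
        rw [← hQ] at hQpos
        -- now Q > 0 ; reduce to R ≤ Q * Q
        have step1 : ∑ ω ∈ F, p ω * (PP p X A ω * PP p X B ω / (PP p X U ω * PP p X C ω))
            = (∑ ω ∈ F, p ω * (PP p X A ω * PP p X B ω / PP p X U ω)) / Q := by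
          rw [Finset.sum_div]
          apply Finset.sum_congr rfl
          intro ω hω
          rw [hPPC ω hω]
          field_simp
        rw [step1, div_le_iff₀ hQpos]
        -- R ≤ Q * Q by sub-fibering over patt X U
        have hmaps2 : ∀ ω ∈ F, patt X U ω ∈ F.image (patt X U) :=
          fun ω hω => Finset.mem_image_of_mem _ hω
        rw [← Finset.sum_fiberwise_of_maps_to hmaps2
            (fun ω => p ω * (PP p X A ω * PP p X B ω / PP p X U ω))]
        -- restriction maps
        set πA : ({i // i ∈ U} → S) → ({i // i ∈ A} → S) :=
          fun u i => u ⟨i.1, hAU i.2⟩ with hπA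
        set πB : ({i // i ∈ U} → S) → ({i // i ∈ B} → S) :=
          fun u i => u ⟨i.1, hBU i.2⟩ with hπB
        have hπApatt : ∀ ω, πA (patt X U ω) = patt X A ω := fun ω => rfl
        have hπBpatt : ∀ ω, πB (patt X U ω) = patt X B ω := fun ω => rfl
        have key : ∀ u ∈ F.image (patt X U),
            ∑ ω ∈ F.filter (fun ω => patt X U ω = u),
                p ω * (PP p X A ω * PP p X B ω / PP p X U ω)
              ≤ probOf p (patt X A) (πA u) * probOf p (patt X B) (πB u) := by
          intro u hu
          obtain ⟨ω₁, hω₁F, hω₁⟩ := Finset.mem_image.mp hu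
          have hsub : F.filter (fun ω => patt X U ω = u)
              = univ.filter (fun ω => patt X U ω = patt X U ω₁) := by
            ext ω
            simp only [Finset.mem_filter, Finset.mem_univ, true_and, hF]
            constructor
            · rintro ⟨_, h2⟩; rw [h2, hω₁]
            · intro h
              refine ⟨?_, by rw [h, hω₁]⟩
              have h2 := patt_sub (X := X) (hC ▸ (inter_subset_left.trans hAU) : C ⊆ U) h
              have h3 : patt X C ω₁ = c := by
                have := hω₁F; rw [hF] at this
                exact (Finset.mem_filter.mp this).2
              rw [h2, h3]
          have hconst : ∀ ω ∈ F.filter (fun ω => patt X U ω = u),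
              p ω * (PP p X A ω * PP p X B ω / PP p X U ω)
                = p ω * (PP p X A ω₁ * PP p X B ω₁ / PP p X U ω₁) := by
            intro ω hω
            have hUu : patt X U ω = patt X U ω₁ := by
              rw [(Finset.mem_filter.mp hω).2, hω₁]
            rw [PP_congr hUu, PP_congr (patt_sub hAU hUu), PP_congr (patt_sub hBU hUu)]
          rw [Finset.sum_congr rfl hconst, ← Finset.sum_mul]
          have hPsum : ∑ ω ∈ F.filter (fun ω => patt X U ω = u), p ω = PP p X U ω₁ := by
            rw [hsub]; rfl
          rw [hPsum]
          have hA1 : probOf p (patt X A) (πA u) = PP p X A ω₁ := by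
            rw [← hω₁, hπApatt, probOf_patt]
          have hB1 : probOf p (patt X B) (πB u) = PP p X B ω₁ := by
            rw [← hω₁, hπBpatt, probOf_patt]
          rw [hA1, hB1]
          rcases eq_or_lt_of_le (PP_nonneg (X := X) hp U ω₁) with h0 | hpos
          · rw [← h0]
            simpa using mul_nonneg (PP_nonneg (X := X) hp A ω₁) (PP_nonneg (X := X) hp B ω₁)
          · rw [mul_div_assoc']
            rw [mul_comm, mul_div_assoc, div_self (ne_of_gt hpos), mul_one]
        calc ∑ u ∈ F.image (patt X U), ∑ ω ∈ F.filter (fun ω => patt X U ω = u),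
                p ω * (PP p X A ω * PP p X B ω / PP p X U ω)
            ≤ ∑ u ∈ F.image (patt X U),
                probOf p (patt X A) (πA u) * probOf p (patt X B) (πB u) :=
              Finset.sum_le_sum key
          _ ≤ (∑ a ∈ F.image (patt X A), probOf p (patt X A) a) *
              (∑ b ∈ F.image (patt X B), probOf p (patt X B) b) := by
              have hinj : ∀ u ∈ F.image (patt X U), ∀ u' ∈ F.image (patt X U),
                  πA u = πA u' → πB u = πB u' → u = u' := by
                intro u _ u' _ hA2 hB2
                funext i
                rcases Finset.mem_union.mp i.2 with hi | hi
                · exact congrFun hA2 ⟨i.1, hi⟩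
                · exact congrFun hB2 ⟨i.1, hi⟩
              have himA : (F.image (patt X U)).image πA = F.image (patt X A) := by
                rw [Finset.image_image]; rfl
              have himB : (F.image (patt X U)).image πB = F.image (patt X B) := by
                rw [Finset.image_image]; rfl
              rw [← himA, ← himB]
              exact pair_sum_le (F.image (patt X U)) πA πB _ _
                (fun a => Finset.sum_nonneg fun ω' _ => hp ω')
                (fun b => Finset.sum_nonneg fun ω' _ => hp ω') hinj
          _ ≤ Q * Q := by
              have hQA : ∑ a ∈ F.image (patt X A), probOf p (patt X A) a ≤ Q := by
                have : ∑ a ∈ F.image (patt X A), probOf p (patt X A) a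
                    = ∑ a ∈ F.image (patt X A), ∑ ω ∈ F.filter (fun ω => patt X A ω = a), p ω := by
                  apply Finset.sum_congr rfl
                  intro a ha
                  obtain ⟨ω₂, hω₂F, hω₂⟩ := Finset.mem_image.mp ha
                  rw [probOf]
                  apply Finset.sum_congr _ (fun _ _ => rfl)
                  ext ω
                  simp only [Finset.mem_filter, Finset.mem_univ, true_and, hF]
                  constructor
                  · intro h
                    refine ⟨?_, h⟩
                    have h' : patt X A ω = patt X A ω₂ := by rw [h, hω₂]
                    have h2 := patt_sub hCA h'
                    have h3 : patt X C ω₂ = c := by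
                      have := hω₂F; rw [hF] at this
                      exact (Finset.mem_filter.mp this).2
                    rw [h2, h3]
                  · exact fun h => h.2
                rw [this, Finset.sum_fiberwise_of_maps_to
                  (fun ω hω => Finset.mem_image_of_mem _ hω) (fun ω => p ω), hFQ]
              have hQB : ∑ b ∈ F.image (patt X B), probOf p (patt X B) b ≤ Q := by
                have : ∑ b ∈ F.image (patt X B), probOf p (patt X B) b
                    = ∑ b ∈ F.image (patt X B), ∑ ω ∈ F.filter (fun ω => patt X B ω = b), p ω := by
                  apply Finset.sum_congr rfl
                  intro b hb
                  obtain ⟨ω₂, hω₂F, hω₂⟩ := Finset.mem_image.mp hb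
                  rw [probOf]
                  apply Finset.sum_congr _ (fun _ _ => rfl)
                  ext ω
                  simp only [Finset.mem_filter, Finset.mem_univ, true_and, hF]
                  constructor
                  · intro h
                    refine ⟨?_, h⟩
                    have h' : patt X B ω = patt X B ω₂ := by rw [h, hω₂]
                    have h2 := patt_sub hCB h'
                    have h3 : patt X C ω₂ = c := by
                      have := hω₂F; rw [hF] at this
                      exact (Finset.mem_filter.mp this).2
                    rw [h2, h3]
                  · exact fun h => h.2
                rw [this, Finset.sum_fiberwise_of_maps_to
                  (fun ω hω => Finset.mem_image_of_mem _ hω) (fun ω => p ω), hFQ]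
              have h1 : 0 ≤ ∑ a ∈ F.image (patt X A), probOf p (patt X A) a :=
                Finset.sum_nonneg fun a _ => Finset.sum_nonneg fun ω' _ => hp ω'
              exact mul_le_mul hQA hQB
                (Finset.sum_nonneg fun b _ => Finset.sum_nonneg fun ω' _ => hp ω') hQpos.le
    _ = ∑ ω, p ω := Finset.sum_fiberwise_of_maps_to hmaps _
    _ = 1 := hsum

/-- Submodularity of joint entropy. -/
lemma jointH_submodular (hp : ∀ ω, 0 ≤ p ω) (hsum : ∑ ω, p ω = 1) (A B : Finset (Fin n)) :
    jointH p X (A ∪ B) + jointH p X (A ∩ B) ≤ jointH p X A + jointH p X B := by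
  rw [jointH_eq p X A, jointH_eq p X B, jointH_eq p X (A ∪ B), jointH_eq p X (A ∩ B)]
  rw [← neg_add, ← neg_add, neg_le_neg_iff, ← Finset.sum_add_distrib, ← Finset.sum_add_distrib]
  have key : ∀ ω ∈ (univ : Finset Ω),
      p ω * Real.logb 2 (PP p X A ω) + p ω * Real.logb 2 (PP p X B ω)
        ≤ p ω * Real.logb 2 (PP p X (A ∪ B) ω) + p ω * Real.logb 2 (PP p X (A ∩ B) ω)
          + (p ω * (PP p X A ω * PP p X B ω / (PP p X (A ∪ B) ω * PP p X (A ∩ B) ω)) - p ω)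
            / Real.log 2 := by
    intro ω _
    rcases eq_or_lt_of_le (hp ω) with h0 | hpos
    · rw [← h0]; simp
    · have hPA : 0 < PP p X A ω := lt_of_lt_of_le hpos (le_PP hp A ω)
      have hPB : 0 < PP p X B ω := lt_of_lt_of_le hpos (le_PP hp B ω)
      have hPU : 0 < PP p X (A ∪ B) ω := lt_of_lt_of_le hpos (le_PP hp _ ω)
      have hPC : 0 < PP p X (A ∩ B) ω := lt_of_lt_of_le hpos (le_PP hp _ ω)
      have hlog2 : (0:ℝ) < Real.log 2 := Real.log_pos one_lt_two
      have hratio : 0 < PP p X A ω * PP p X B ω / (PP p X (A ∪ B) ω * PP p X (A ∩ B) ω) :=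
        div_pos (mul_pos hPA hPB) (mul_pos hPU hPC)
      have hlb := Real.log_le_sub_one_of_pos hratio
      -- log (ab/(uc)) ≤ ab/(uc) - 1
      have expand : Real.log (PP p X A ω * PP p X B ω /
            (PP p X (A ∪ B) ω * PP p X (A ∩ B) ω))
          = Real.log (PP p X A ω) + Real.log (PP p X B ω)
            - Real.log (PP p X (A ∪ B) ω) - Real.log (PP p X (A ∩ B) ω) := by
        rw [Real.log_div (mul_pos hPA hPB).ne' (mul_pos hPU hPC).ne', Real.log_mul hPA.ne' hPB.ne',
          Real.log_mul hPU.ne' hPC.ne']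
        ring
      rw [expand] at hlb
      simp only [Real.logb, div_eq_mul_inv]
      have := mul_le_mul_of_nonneg_left hlb (le_of_lt hpos)
      calc p ω * (Real.log (PP p X A ω) * (Real.log 2)⁻¹)
            + p ω * (Real.log (PP p X B ω) * (Real.log 2)⁻¹)
          = p ω * (Real.log (PP p X (A ∪ B) ω) * (Real.log 2)⁻¹)
            + p ω * (Real.log (PP p X (A ∩ B) ω) * (Real.log 2)⁻¹)
            + p ω * (Real.log (PP p X A ω) + Real.log (PP p X B ω)
              - Real.log (PP p X (A ∪ B) ω) - Real.log (PP p X (A ∩ B) ω)) * (Real.log 2)⁻¹ := by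
            ring
        _ ≤ p ω * (Real.log (PP p X (A ∪ B) ω) * (Real.log 2)⁻¹)
            + p ω * (Real.log (PP p X (A ∩ B) ω) * (Real.log 2)⁻¹)
            + (p ω * (PP p X A ω * PP p X B ω /
                (PP p X (A ∪ B) ω * PP p X (A ∩ B) ω)) - p ω) * (Real.log 2)⁻¹ := by
            apply add_le_add_right
            apply mul_le_mul_of_nonneg_right _ (inv_nonneg.mpr hlog2.le)
            calc p ω * (Real.log (PP p X A ω) + Real.log (PP p X B ω)
                  - Real.log (PP p X (A ∪ B) ω) - Real.log (PP p X (A ∩ B) ω))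
                ≤ p ω * (PP p X A ω * PP p X B ω /
                    (PP p X (A ∪ B) ω * PP p X (A ∩ B) ω) - 1) := this
              _ = p ω * (PP p X A ω * PP p X B ω /
                    (PP p X (A ∪ B) ω * PP p X (A ∩ B) ω)) - p ω := by ring
  calc ∑ ω, (p ω * Real.logb 2 (PP p X A ω) + p ω * Real.logb 2 (PP p X B ω))
      ≤ ∑ ω, (p ω * Real.logb 2 (PP p X (A ∪ B) ω) + p ω * Real.logb 2 (PP p X (A ∩ B) ω)
          + (p ω * (PP p X A ω * PP p X B ω / (PP p X (A ∪ B) ω * PP p X (A ∩ B) ω)) - p ω)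
            / Real.log 2) := Finset.sum_le_sum key
    _ ≤ ∑ ω, (p ω * Real.logb 2 (PP p X (A ∪ B) ω) + p ω * Real.logb 2 (PP p X (A ∩ B) ω)) := by
        rw [Finset.sum_add_distrib]
        have : ∑ ω, (p ω * (PP p X A ω * PP p X B ω /
            (PP p X (A ∪ B) ω * PP p X (A ∩ B) ω)) - p ω) / Real.log 2 ≤ 0 := by
          rw [← Finset.sum_div, Finset.sum_sub_distrib, hsum]
          apply div_nonpos_of_nonpos_of_nonneg
          · linarith [T_le_one (X := X) hp hsum A B]
          · exact Real.log_nonneg one_le_two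
        linarith

end Submod

section Sharp

variable {Ω S : Type*} [Fintype Ω] [DecidableEq S] {n : ℕ}
variable {p : Ω → ℝ} {X : Fin n → Ω → S}

/-- The sharp set at level `j`. -/
def sharpSet (𝒜 : Multiset (Finset (Fin n))) (j : ℕ) : Finset (Fin n) :=
  univ.filter (fun i => j ≤ Multiset.card (𝒜.filter (fun A => i ∈ A)))

lemma sharpSet_zero (𝒜 : Multiset (Finset (Fin n))) : sharpSet 𝒜 0 = univ := by
  simp [sharpSet]

lemma sharpSet_anti (𝒜 : Multiset (Finset (Fin n))) {j k : ℕ} (h : j ≤ k) :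
    sharpSet 𝒜 k ⊆ sharpSet 𝒜 j := by
  intro i hi
  simp only [sharpSet, Finset.mem_filter, Finset.mem_univ, true_and] at hi ⊢
  omega

lemma sharpSet_top (𝒜 : Multiset (Finset (Fin n))) :
    sharpSet 𝒜 (Multiset.card 𝒜 + 1) = ∅ := by
  ext i
  simp only [sharpSet, Finset.mem_filter, Finset.mem_univ, true_and, Finset.notMem_empty,
    iff_false, not_le]
  exact lt_of_le_of_lt (Multiset.card_le_card (Multiset.filter_le _ _)) (by omega)

lemma sharpSet_cons (A : Finset (Fin n)) (𝒜 : Multiset (Finset (Fin n))) (k : ℕ) :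
    sharpSet (A ::ₘ 𝒜) (k + 1) = sharpSet 𝒜 (k + 1) ∪ (A ∩ sharpSet 𝒜 k) := by
  ext i
  simp only [sharpSet, Finset.mem_union, Finset.mem_inter, Finset.mem_filter, Finset.mem_univ,
    true_and]
  by_cases hiA : i ∈ A
  · rw [show Multiset.filter (fun B => i ∈ B) (A ::ₘ 𝒜) = A ::ₘ Multiset.filter (fun B => i ∈ B) 𝒜
      from Multiset.filter_cons_of_pos _ hiA]
    simp only [Multiset.card_cons, hiA, true_and]
    omega
  · rw [show Multiset.filter (fun B => i ∈ B) (A ::ₘ 𝒜) = Multiset.filter (fun B => i ∈ B) 𝒜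
      from Multiset.filter_cons_of_neg _ hiA]
    simp [hiA]

end Sharp

/-- Compression to the totally ordered family `𝒜♯` (where
`A♯_j = {i : i lies in at least j members of 𝒜}`) does not increase total entropy. -/
theorem sharp_compression_entropy_le {Ω S : Type*} [Fintype Ω] [DecidableEq S] {n : ℕ}
    (p : Ω → ℝ) (hp : ∀ ω, 0 ≤ p ω) (hsum : ∑ ω, p ω = 1)
    (X : Fin n → Ω → S) (𝒜 : Multiset (Finset (Fin n))) :
    ∑ j ∈ Finset.Icc 1 (Multiset.card 𝒜),
        jointH p X (univ.filter (fun i => j ≤ Multiset.card (𝒜.filter (fun A => i ∈ A))))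
      ≤ (𝒜.map (fun A => jointH p X A)).sum := by
  classical
  -- rewrite LHS in terms of sharpSet and range sums
  have reindex : ∀ (ℬ : Multiset (Finset (Fin n))) (N : ℕ),
      ∑ j ∈ Finset.Icc 1 N, jointH p X (sharpSet ℬ j)
        = ∑ k ∈ Finset.range N, jointH p X (sharpSet ℬ (k + 1)) := by
    intro ℬ N
    induction N with
    | zero => simp
    | succ N ih =>
      rw [Finset.sum_range_succ, ← ih, ← Finset.sum_Icc_succ_top (by omega : 1 ≤ N + 1)]
  have main : ∀ (𝒜 : Multiset (Finset (Fin n))),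
      ∑ k ∈ Finset.range (Multiset.card 𝒜), jointH p X (sharpSet 𝒜 (k + 1))
        ≤ (𝒜.map (fun A => jointH p X A)).sum := by
    intro 𝒜
    induction 𝒜 using Multiset.induction with
    | empty => simp
    | cons A 𝒯 ih =>
      set m := Multiset.card 𝒯 with hm
      have hcard : Multiset.card (A ::ₘ 𝒯) = m + 1 := by simp [hm]
      rw [hcard, Multiset.map_cons, Multiset.sum_cons]
      have step : ∀ k, jointH p X (sharpSet (A ::ₘ 𝒯) (k + 1))
          ≤ jointH p X (sharpSet 𝒯 (k + 1))
            + (jointH p X (A ∩ sharpSet 𝒯 k) - jointH p X (A ∩ sharpSet 𝒯 (k + 1))) := by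
        intro k
        rw [sharpSet_cons]
        have hsub := jointH_submodular (p := p) (X := X) hp hsum
          (sharpSet 𝒯 (k + 1)) (A ∩ sharpSet 𝒯 k)
        have hint : sharpSet 𝒯 (k + 1) ∩ (A ∩ sharpSet 𝒯 k) = A ∩ sharpSet 𝒯 (k + 1) := by
          have h1 : sharpSet 𝒯 (k + 1) ⊆ sharpSet 𝒯 k := sharpSet_anti 𝒯 (by omega)
          ext i
          simp only [Finset.mem_inter]
          constructor
          · rintro ⟨h2, h3, _⟩; exact ⟨h3, h2⟩
          · rintro ⟨h2, h3⟩; exact ⟨h3, h2, h1 h3⟩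
        rw [hint] at hsub
        linarith
      calc ∑ k ∈ Finset.range (m + 1), jointH p X (sharpSet (A ::ₘ 𝒯) (k + 1))
          ≤ ∑ k ∈ Finset.range (m + 1), (jointH p X (sharpSet 𝒯 (k + 1))
              + (jointH p X (A ∩ sharpSet 𝒯 k) - jointH p X (A ∩ sharpSet 𝒯 (k + 1)))) :=
            Finset.sum_le_sum (fun k _ => step k)
        _ = ∑ k ∈ Finset.range (m + 1), jointH p X (sharpSet 𝒯 (k + 1))
              + (jointH p X (A ∩ sharpSet 𝒯 0) - jointH p X (A ∩ sharpSet 𝒯 (m + 1))) := by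
            rw [Finset.sum_add_distrib, Finset.sum_range_sub' (fun k => jointH p X (A ∩ sharpSet 𝒯 k))]
        _ = ∑ k ∈ Finset.range m, jointH p X (sharpSet 𝒯 (k + 1)) + jointH p X (sharpSet 𝒯 (m + 1))
              + (jointH p X A - jointH p X ∅) := by
            rw [Finset.sum_range_succ, sharpSet_zero, Finset.inter_univ, sharpSet_top,
              Finset.inter_empty, hm]
        _ = jointH p X A + ∑ k ∈ Finset.range m, jointH p X (sharpSet 𝒯 (k + 1)) := by
            rw [sharpSet_top, hm]
            ring
        _ ≤ jointH p X A + (𝒯.map (fun A => jointH p X A)).sum := by linarith [ih]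
  have := main 𝒜
  rw [← reindex 𝒜 (Multiset.card 𝒜)] at this
  exact this
end

section
/- Discrete Uniform Cover Inequality: if S is a finite nonempty subset of ℤⁿ and 𝒜 is a multiset of subsets of [n] in which every i ∈ [n] appears in at least k members (counting multiplicity), then |S|^k ≤ ∏_{A∈𝒜} |S_A|, where S_A is the image of S under the coordinate projection onto the coordinates in A. -/
open Finset MeasureTheory
open scoped ENNReal

lemma holder_pre {α : Type} [Fintype α] {ι' : Type} (J : Finset ι')
    (f : ι' → α → ℝ≥0∞) (p : ι' → ℝ) (hp : ∑ j ∈ J, p j = 1) (h2 : ∀ j ∈ J, 0 ≤ p j) :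
    ∑ a, ∏ j ∈ J, f j a ^ p j ≤ ∏ j ∈ J, (∑ a, f j a) ^ p j := by
  letI : MeasurableSpace α := ⊤
  have hm : ∀ j, Measurable (f j) := fun j s _ => trivial
  have h := ENNReal.lintegral_prod_norm_pow_le (μ := Measure.count) J
    (f := f) (fun j _ => (hm j).aemeasurable) hp h2
  haveI : MeasurableSingletonClass α := ⟨fun a => trivial⟩
  simpa [MeasureTheory.lintegral_count, tsum_fintype] using h

lemma holderF {κ ι' : Type} (T : Finset κ) (J : Finset ι')
    (f : ι' → κ → ℝ≥0∞) (p : ι' → ℝ) (hp : ∑ j ∈ J, p j = 1) (h2 : ∀ j ∈ J, 0 ≤ p j) :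
    ∑ t ∈ T, ∏ j ∈ J, f j t ^ p j ≤ ∏ j ∈ J, (∑ t ∈ T, f j t) ^ p j := by
  have h := holder_pre (α := {t // t ∈ T}) J (fun j a => f j a.1) p hp h2
  simp only [Finset.sum_coe_sort] at h
  calc ∑ t ∈ T, ∏ j ∈ J, f j t ^ p j
      = ∑ a ∈ T.attach, ∏ j ∈ J, f j a.1 ^ p j := (Finset.sum_attach _ _).symm
    _ ≤ ∏ j ∈ J, (∑ a ∈ T.attach, f j a.1) ^ p j := by
        simpa [Finset.sum_attach] using h
    _ = ∏ j ∈ J, (∑ t ∈ T, f j t) ^ p j := by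
        refine Finset.prod_congr rfl fun j _ => ?_
        rw [Finset.sum_attach]

lemma sum_rpow_le {κ : Type} (T : Finset κ) (c : κ → ℝ≥0∞) {w : ℝ} (hw : 1 ≤ w) :
    ∑ t ∈ T, c t ^ w ≤ (∑ t ∈ T, c t) ^ w := by
  set s := ∑ t ∈ T, c t with hs
  by_cases h0 : s = 0
  · have hc : ∀ t ∈ T, c t = 0 := Finset.sum_eq_zero_iff.mp h0
    have : ∑ t ∈ T, c t ^ w = 0 := Finset.sum_eq_zero fun t ht => by
      simp [hc t ht, ENNReal.zero_rpow_of_pos (lt_of_lt_of_le one_pos hw)]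
    simp [this]
  by_cases htop : s = ⊤
  · rw [htop, ENNReal.top_rpow_of_pos (lt_of_lt_of_le one_pos hw)]; exact le_top
  calc ∑ t ∈ T, c t ^ w ≤ ∑ t ∈ T, c t * s ^ (w - 1) := by
        refine Finset.sum_le_sum fun t ht => ?_
        rcases eq_or_ne (c t) 0 with h | h
        · simp [h, ENNReal.zero_rpow_of_pos (lt_of_lt_of_le one_pos hw)]
        have hct : c t ≠ ⊤ := by
          intro e
          exact htop (top_le_iff.mp (e ▸ Finset.single_le_sum (fun _ _ => zero_le) ht))
        calc c t ^ w = c t ^ ((1:ℝ) + (w - 1)) := by ring_nf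
          _ = c t ^ (1:ℝ) * c t ^ (w - 1) := ENNReal.rpow_add _ _ h hct
          _ ≤ c t * s ^ (w - 1) := by
              rw [ENNReal.rpow_one]
              have h1 : c t ≤ s := Finset.single_le_sum (f := c) (fun _ _ => zero_le) ht
              have h2 : (0:ℝ) ≤ w - 1 := by linarith
              exact mul_le_mul' le_rfl (ENNReal.rpow_le_rpow h1 h2)
    _ = s * s ^ (w - 1) := by rw [← Finset.sum_mul]
    _ = s ^ w := by
        nth_rewrite 1 [← ENNReal.rpow_one s]
        rw [← ENNReal.rpow_add _ _ h0 htop]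
        norm_num

def prj {ι : Type} (A : Finset ι) (S : Finset (ι → ℤ)) : Finset ({i // i ∈ A} → ℤ) :=
  S.image (fun f (i : {i // i ∈ A}) => f i.1)

variable {ι : Type} [DecidableEq ι] [Fintype ι]

lemma mem_prj {A : Finset ι} {S : Finset (ι → ℤ)} {g : {i // i ∈ A} → ℤ} :
    g ∈ prj A S ↔ ∃ f ∈ S, (fun i : {i // i ∈ A} => f i.1) = g := by
  simp [prj, Finset.mem_image]

lemma card_prj_eq_sum (S : Finset (ι → ℤ)) (i₀ : ι) {A : Finset ι} (hA : i₀ ∈ A) :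
    (prj A S).card = ∑ t ∈ S.image (fun f => f i₀),
      (prj A (S.filter (fun f => f i₀ = t))).card := by
  have hU : prj A S = (S.image (fun f => f i₀)).biUnion
      (fun t => prj A (S.filter (fun f => f i₀ = t))) := by
    ext g
    simp only [mem_prj, Finset.mem_biUnion, Finset.mem_image, Finset.mem_filter]
    constructor
    · rintro ⟨f, hf, rfl⟩
      exact ⟨f i₀, ⟨f, hf, rfl⟩, f, ⟨hf, rfl⟩, rfl⟩
    · rintro ⟨t, _, f, ⟨hf, _⟩, rfl⟩
      exact ⟨f, hf, rfl⟩
  rw [hU]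
  refine Finset.card_biUnion ?_
  intro t _ t' _ htt'
  refine Finset.disjoint_left.mpr ?_
  rintro g hg hg'
  obtain ⟨f, hf, rfl⟩ := mem_prj.mp hg
  obtain ⟨f', hf', he⟩ := mem_prj.mp hg'
  have h1 : f i₀ = t := (Finset.mem_filter.mp hf).2
  have h2 : f' i₀ = t' := (Finset.mem_filter.mp hf').2
  have := congrFun he ⟨i₀, hA⟩
  simp only at this
  exact htt' (by rw [← h1, ← this, h2])

lemma card_prj_fiber {X : Finset (ι → ℤ)} {i₀ : ι} {t : ℤ} (hX : ∀ f ∈ X, f i₀ = t)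
    {A : Finset ι} (hA : i₀ ∈ A) :
    (prj A X).card
      = (prj (A.subtype (· ≠ i₀)) (X.image (fun f (i : {i : ι // i ≠ i₀}) => f i.1))).card := by
  refine Finset.card_bij'
    (fun g _ => fun i => g ⟨i.1.1, Finset.mem_subtype.mp i.2⟩)
    (fun h _ => fun i => if hi : i.1 = i₀ then t else
      h ⟨⟨i.1, hi⟩, Finset.mem_subtype.mpr i.2⟩) ?_ ?_ ?_ ?_
  · -- maps into
    rintro g hg
    obtain ⟨f, hf, rfl⟩ := mem_prj.mp hg
    refine mem_prj.mpr ⟨fun i : {i : ι // i ≠ i₀} => f i.1, Finset.mem_image.mpr ⟨f, hf, rfl⟩, rfl⟩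
  · rintro h hh
    obtain ⟨u, hu, rfl⟩ := mem_prj.mp hh
    obtain ⟨f, hf, rfl⟩ := Finset.mem_image.mp hu
    refine mem_prj.mpr ⟨f, hf, ?_⟩
    funext i
    by_cases hi : i.1 = i₀
    · simp only [dif_pos hi]
      rw [← hX f hf, hi]
    · simp only [dif_neg hi]
  · rintro g hg
    obtain ⟨f, hf, rfl⟩ := mem_prj.mp hg
    funext i
    by_cases hi : i.1 = i₀
    · simp only [dif_pos hi]
      rw [← hX f hf, hi]
    · simp only [dif_neg hi]
  · rintro h hh
    funext i
    have hne : i.1.1 ≠ i₀ := i.1.2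
    simp only [dif_neg hne]

lemma card_eq_sum_fibers (S : Finset (ι → ℤ)) (i₀ : ι) :
    S.card = ∑ t ∈ S.image (fun f => f i₀),
      ((S.filter (fun f => f i₀ = t)).image (fun f (i : {i : ι // i ≠ i₀}) => f i.1)).card := by
  rw [Finset.card_eq_sum_card_fiberwise (f := fun f => f i₀)
    (t := S.image (fun f => f i₀)) (fun f hf => Finset.mem_image_of_mem _ hf)]
  refine Finset.sum_congr rfl fun t _ => ?_
  rw [Finset.card_image_of_injOn]
  intro f hf g hg he
  funext i
  by_cases hi : i = i₀
  · rw [hi, (Finset.mem_filter.mp hf).2, (Finset.mem_filter.mp hg).2]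
  · exact congrFun he ⟨i, hi⟩

lemma card_prj_fiber_le (S : Finset (ι → ℤ)) (i₀ : ι) (t : ℤ) {A : Finset ι} (hA : i₀ ∉ A) :
    (prj (A.subtype (· ≠ i₀))
        ((S.filter (fun f => f i₀ = t)).image (fun f (i : {i : ι // i ≠ i₀}) => f i.1))).card
      ≤ (prj A S).card := by
  refine Finset.card_le_card_of_injOn
    (fun h => fun i => h ⟨⟨i.1, fun e => hA (e ▸ i.2)⟩, Finset.mem_subtype.mpr i.2⟩) ?_ ?_
  · intro h hh
    obtain ⟨u, hu, rfl⟩ := mem_prj.mp hh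
    obtain ⟨f, hf, rfl⟩ := Finset.mem_image.mp hu
    exact mem_prj.mpr ⟨f, (Finset.mem_filter.mp hf).1, rfl⟩
  · intro h₁ _ h₂ _ he
    funext i
    have : ∀ h : {i : {i : ι // i ∈ A}} → ℤ, True := fun _ => trivial
    have hmem : (i.1.1 : ι) ∈ A := Finset.mem_subtype.mp i.2
    have := congrFun he ⟨i.1.1, hmem⟩
    simpa using this

set_option maxHeartbeats 1000000 in
lemma frac : ∀ (n : ℕ) (ι : Type) [Fintype ι] [DecidableEq ι], Fintype.card ι = n →
    ∀ (k : ℕ), 0 < k → ∀ (S : Finset (ι → ℤ)), S.Nonempty →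
    ∀ (𝒜 : Multiset (Finset ι)), (∀ i : ι, k ≤ Multiset.card (𝒜.filter (fun A => i ∈ A))) →
    (S.card : ℝ≥0∞) ≤ (𝒜.map (fun A => ((prj A S).card : ℝ≥0∞) ^ (k : ℝ)⁻¹)).prod := by
  intro n
  induction n with
  | zero =>
    intro ι _ _ hcard k hk S hS 𝒜 hcov
    haveI : IsEmpty ι := Fintype.card_eq_zero_iff.mp hcard
    have hS1 : S.card = 1 := le_antisymm
      (Finset.card_le_one.mpr fun a _ b _ => Subsingleton.elim a b) hS.card_pos
    rw [hS1]
    push_cast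
    refine Multiset.one_le_prod_of_one_le ?_
    intro x hx
    obtain ⟨A, hA, rfl⟩ := Multiset.mem_map.mp hx
    refine ENNReal.one_le_rpow ?_ (inv_pos.mpr (by exact_mod_cast hk))
    exact_mod_cast (hS.image _).card_pos
  | succ n ih =>
    intro ι _ _ hcard k hk S hS 𝒜 hcov
    obtain ⟨i₀⟩ : Nonempty ι := Fintype.card_pos_iff.mp (by omega)
    have hκ : Fintype.card {i : ι // i ≠ i₀} = n := by
      have h := Fintype.card_subtype_compl (fun i : ι => i = i₀)
      simp only [Fintype.card_subtype_eq] at h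
      have : Fintype.card {i : ι // i ≠ i₀} = Fintype.card ι - 1 := h
      omega
    set T : Finset ℤ := S.image (fun f => f i₀) with hT
    set F : ℤ → Finset ({i : ι // i ≠ i₀} → ℤ) := fun t =>
      (S.filter (fun f => f i₀ = t)).image (fun f (i : {i : ι // i ≠ i₀}) => f i.1) with hF
    set c : Finset ι → ℤ → ℝ≥0∞ := fun A t =>
      ((prj (A.subtype (· ≠ i₀)) (F t)).card : ℝ≥0∞) with hc
    set g : Finset ι → ℝ≥0∞ := fun A => ((prj A S).card : ℝ≥0∞) ^ (k : ℝ)⁻¹ with hg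
    set 𝒜₁ := 𝒜.filter (fun A => i₀ ∈ A) with h𝒜₁
    set 𝒜₂ := 𝒜.filter (fun A => ¬ i₀ ∈ A) with h𝒜₂
    have hsplit : 𝒜₁ + 𝒜₂ = 𝒜 := Multiset.filter_add_not _ _
    have hm : k ≤ Multiset.card 𝒜₁ := hcov i₀
    -- cover condition downstairs
    have hcov' : ∀ i : {i : ι // i ≠ i₀},
        k ≤ Multiset.card ((𝒜.map (fun A => A.subtype (· ≠ i₀))).filter (fun B => i ∈ B)) := by
      intro i
      rw [Multiset.filter_map, Multiset.card_map]
      have he : Multiset.filter ((fun B => i ∈ B) ∘ fun A => A.subtype (· ≠ i₀)) 𝒜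
          = Multiset.filter (fun A => i.1 ∈ A) 𝒜 := by
        refine Multiset.filter_congr ?_
        intro A _
        simp [Function.comp, Finset.mem_subtype]
      rw [he]
      exact hcov i.1
    have hFne : ∀ t ∈ T, (F t).Nonempty := by
      intro t ht
      obtain ⟨f, hf, rfl⟩ := Finset.mem_image.mp ht
      have hne : (S.filter (fun f' => f' i₀ = f i₀)).Nonempty :=
        ⟨f, Finset.mem_filter.mpr ⟨hf, rfl⟩⟩
      exact hne.image _
    have hIH : ∀ t ∈ T, ((F t).card : ℝ≥0∞) ≤ (𝒜.map (fun A => c A t ^ (k:ℝ)⁻¹)).prod := by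
      intro t ht
      have h := ih {i : ι // i ≠ i₀} hκ k hk (F t) (hFne t ht)
        (𝒜.map (fun A => A.subtype (· ≠ i₀))) hcov'
      rw [Multiset.map_map] at h
      exact h
    -- Step A
    have stepA : ∀ t ∈ T, ((F t).card : ℝ≥0∞)
        ≤ (𝒜₂.map g).prod * (𝒜₁.map (fun A => c A t ^ (k:ℝ)⁻¹)).prod := by
      intro t ht
      have h2 : (𝒜₂.map (fun A => c A t ^ (k:ℝ)⁻¹)).prod ≤ (𝒜₂.map g).prod := by
        refine Multiset.prod_map_le_prod_map _ _ ?_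
        intro A hA
        have hi₀ : i₀ ∉ A := (Multiset.mem_filter.mp hA).2
        have hle : c A t ≤ ((prj A S).card : ℝ≥0∞) := by
          simp only [hc, hF]
          exact_mod_cast card_prj_fiber_le S i₀ t hi₀
        exact ENNReal.rpow_le_rpow hle (by positivity)
      calc ((F t).card : ℝ≥0∞) ≤ (𝒜.map (fun A => c A t ^ (k:ℝ)⁻¹)).prod := hIH t ht
        _ = (𝒜₁.map (fun A => c A t ^ (k:ℝ)⁻¹)).prod * (𝒜₂.map (fun A => c A t ^ (k:ℝ)⁻¹)).prod := by
            rw [← hsplit, Multiset.map_add, Multiset.prod_add]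
        _ ≤ (𝒜₁.map (fun A => c A t ^ (k:ℝ)⁻¹)).prod * (𝒜₂.map g).prod := mul_le_mul' le_rfl h2
        _ = (𝒜₂.map g).prod * (𝒜₁.map (fun A => c A t ^ (k:ℝ)⁻¹)).prod := mul_comm _ _
    -- Step C : fiber sums
    have stepC : ∀ A ∈ 𝒜₁, ∑ t ∈ T, c A t = ((prj A S).card : ℝ≥0∞) := by
      intro A hA
      have hi₀ : i₀ ∈ A := (Multiset.mem_filter.mp hA).2
      have h1 := card_prj_eq_sum S i₀ hi₀
      have h2 : (prj A S).card = ∑ t ∈ T, (prj (A.subtype (· ≠ i₀)) (F t)).card := by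
        rw [h1]
        refine Finset.sum_congr rfl fun t _ => ?_
        exact card_prj_fiber (fun f hf => (Finset.mem_filter.mp hf).2) hi₀
      rw [h2]
      push_cast
      rfl
    -- Step B : Hölder
    have stepB : ∑ t ∈ T, (𝒜₁.map (fun A => c A t ^ (k:ℝ)⁻¹)).prod
        ≤ (𝒜₁.map (fun A => (∑ t ∈ T, c A t) ^ (k:ℝ)⁻¹)).prod := by
      set l := 𝒜₁.toList with hl
      have hcoe : (l : Multiset (Finset ι)) = 𝒜₁ := Multiset.coe_toList 𝒜₁
      have hlen : l.length = Multiset.card 𝒜₁ := by rw [hl, Multiset.length_toList]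
      have hmk : k ≤ l.length := hlen ▸ hm
      have hm0 : (l.length : ℝ) ≠ 0 := Nat.cast_ne_zero.mpr (by omega)
      have hk0 : (k : ℝ) ≠ 0 := Nat.cast_ne_zero.mpr (by omega)
      have hprod : ∀ (h : Finset ι → ℝ≥0∞),
          (𝒜₁.map h).prod = ∏ j : Fin l.length, h l[j.1] := by
        intro h
        rw [← hcoe, Multiset.map_coe, Multiset.prod_coe]
        exact (Fin.prod_univ_fun_getElem l h).symm
      have hw1 : (1:ℝ) ≤ (l.length : ℝ) * (k : ℝ)⁻¹ := by
        rw [← div_eq_mul_inv]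
        rw [le_div_iff₀ (by exact_mod_cast hk)]
        simpa using (by exact_mod_cast hmk : (k:ℝ) ≤ (l.length : ℝ))
      have key1 : ∀ (A : Finset ι) (t : ℤ),
          (c A t ^ ((l.length : ℝ) * (k:ℝ)⁻¹)) ^ ((l.length : ℝ))⁻¹ = c A t ^ (k:ℝ)⁻¹ := by
        intro A t
        rw [← ENNReal.rpow_mul]
        congr 1
        field_simp
      calc ∑ t ∈ T, (𝒜₁.map (fun A => c A t ^ (k:ℝ)⁻¹)).prod
          = ∑ t ∈ T, ∏ j : Fin l.length,
              (c l[j.1] t ^ ((l.length : ℝ) * (k:ℝ)⁻¹)) ^ ((l.length : ℝ))⁻¹ := by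
            refine Finset.sum_congr rfl fun t _ => ?_
            rw [hprod (fun A => c A t ^ (k:ℝ)⁻¹)]
            exact Finset.prod_congr rfl fun j _ => (key1 _ _).symm
        _ ≤ ∏ j : Fin l.length,
              (∑ t ∈ T, c l[j.1] t ^ ((l.length : ℝ) * (k:ℝ)⁻¹)) ^ ((l.length : ℝ))⁻¹ := by
            refine holderF T Finset.univ _ (fun _ => ((l.length : ℝ))⁻¹) ?_ ?_
            · simp only [Finset.sum_const, Finset.card_univ, Fintype.card_fin, nsmul_eq_mul]
              field_simp
            · intro j _
              positivity
        _ ≤ ∏ j : Fin l.length, ((∑ t ∈ T, c l[j.1] t) ^ ((l.length : ℝ) * (k:ℝ)⁻¹))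
              ^ ((l.length : ℝ))⁻¹ := by
            refine Finset.prod_le_prod' fun j _ => ?_
            exact ENNReal.rpow_le_rpow (sum_rpow_le T _ hw1) (by positivity)
        _ = ∏ j : Fin l.length, (∑ t ∈ T, c l[j.1] t) ^ (k:ℝ)⁻¹ := by
            refine Finset.prod_congr rfl fun j _ => ?_
            rw [← ENNReal.rpow_mul]
            congr 1
            field_simp
        _ = (𝒜₁.map (fun A => (∑ t ∈ T, c A t) ^ (k:ℝ)⁻¹)).prod := by
            rw [hprod (fun A => (∑ t ∈ T, c A t) ^ (k:ℝ)⁻¹)]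
    -- assemble
    calc (S.card : ℝ≥0∞) = ∑ t ∈ T, ((F t).card : ℝ≥0∞) := by
          rw [show S.card = ∑ t ∈ T, (F t).card from card_eq_sum_fibers S i₀]
          push_cast
          rfl
      _ ≤ ∑ t ∈ T, ((𝒜₂.map g).prod * (𝒜₁.map (fun A => c A t ^ (k:ℝ)⁻¹)).prod) :=
          Finset.sum_le_sum stepA
      _ = (𝒜₂.map g).prod * ∑ t ∈ T, (𝒜₁.map (fun A => c A t ^ (k:ℝ)⁻¹)).prod := by
          rw [Finset.mul_sum]
      _ ≤ (𝒜₂.map g).prod * (𝒜₁.map (fun A => (∑ t ∈ T, c A t) ^ (k:ℝ)⁻¹)).prod :=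
          mul_le_mul' le_rfl stepB
      _ = (𝒜₂.map g).prod * (𝒜₁.map g).prod := by
          congr 1
          refine congrArg Multiset.prod (Multiset.map_congr rfl ?_)
          intro A hA
          rw [stepC A hA]
      _ = (𝒜.map g).prod := by
          rw [← hsplit, Multiset.map_add, Multiset.prod_add, mul_comm]

/-- Discrete Uniform Cover Inequality: if every `i` lies in at least `k` members of
`𝒜` (with multiplicity), then `|S|^k ≤ ∏_{A∈𝒜} |S_A|`, where `S_A` is the projection
of `S ⊆ ℤⁿ` onto the coordinates in `A`. -/
theorem discrete_uniform_cover_inequality {n k : ℕ}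
    (S : Finset (Fin n → ℤ)) (hS : S.Nonempty)
    (𝒜 : Multiset (Finset (Fin n)))
    (hcov : ∀ i : Fin n, k ≤ Multiset.card (𝒜.filter (fun A => i ∈ A))) :
    S.card ^ k ≤
      (𝒜.map (fun A => (S.image (fun f (i : {i // i ∈ A}) => f i.1)).card)).prod := by
  rcases Nat.eq_zero_or_pos k with hk | hk
  · subst hk
    simp only [pow_zero]
    refine Multiset.one_le_prod_of_one_le ?_
    intro x hx
    obtain ⟨A, hA, rfl⟩ := Multiset.mem_map.mp hx
    exact (hS.image _).card_pos
  · have h := frac n (Fin n) (Fintype.card_fin n) k hk S hS 𝒜 hcov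
    have hk0 : (k : ℝ) ≠ 0 := Nat.cast_ne_zero.mpr (by omega)
    have h2 : ((S.card : ℝ≥0∞)) ^ k
        ≤ ((𝒜.map (fun A => ((prj A S).card : ℝ≥0∞) ^ (k:ℝ)⁻¹)).prod) ^ k :=
      pow_le_pow_left' h k
    have h3 : ((𝒜.map (fun A => ((prj A S).card : ℝ≥0∞) ^ (k:ℝ)⁻¹)).prod) ^ k
        = (𝒜.map (fun A => ((prj A S).card : ℝ≥0∞))).prod := by
      rw [← Multiset.prod_map_pow]
      refine congrArg Multiset.prod (Multiset.map_congr rfl ?_)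
      intro A _
      rw [← ENNReal.rpow_natCast (((prj A S).card : ℝ≥0∞) ^ (k:ℝ)⁻¹) k, ← ENNReal.rpow_mul]
      rw [inv_mul_cancel₀ hk0, ENNReal.rpow_one]
    rw [h3] at h2
    have h4 : ((S.card ^ k : ℕ) : ℝ≥0∞)
        ≤ (((𝒜.map (fun A => (prj A S).card)).prod : ℕ) : ℝ≥0∞) := by
      push_cast [Nat.cast_multiset_prod, Multiset.map_map]
      simpa [Multiset.map_map, Function.comp] using h2
    exact_mod_cast h4
end
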